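/- Let d < e be integers and y ∈ V a nonzero element whose homogeneous components y_i satisfy: y_i = 0 for i < d, z := y_d ≠ 0, y_i = 0 for d < i < e, and y_e ≠ 0. Let 𝒦 = {𝔤 ∈ 𝒢 : 𝔤·y = 0} and let 𝒦̂ be the span of the leading terms of the nonzero elements of 𝒦. Then every h ∈ 𝒦̂ satisfies h·z = 0 and h·y_e ∈ 𝒢·z, where 𝒢·z denotes the subspace {𝔤·z : 𝔤 ∈ 𝒢}. In other words, 𝒦̂ ⊆ ℋ_{ȳₑ} := {h ∈ 𝒢 : h·z = 0 and h·y_e ∈ 𝒢·z}. -/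
import Mathlib

open DirectSum Module

/-- The degree-`i` homogeneous component of `v` with respect to the grading `𝒲`. -/
noncomputable def grComp {W : Type*} [AddCommGroup W] [Module ℂ W]
    (𝒲 : ℤ → Submodule ℂ W) [Decomposition 𝒲] (v : W) (i : ℤ) : W :=
  ((decompose 𝒲 v) i : W)

/-- `IsLead 𝒲 v d z` : `z` is the leading term of `v`, of degree `d`. -/
def IsLead {W : Type*} [AddCommGroup W] [Module ℂ W]
    (𝒲 : ℤ → Submodule ℂ W) [Decomposition 𝒲] (v : W) (d : ℤ) (z : W) : Prop :=
  grComp 𝒲 v d = z ∧ z ≠ 0 ∧ ∀ i < d, grComp 𝒲 v i = 0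

/-- The span of the leading terms of nonzero elements of a subspace `M`. -/
noncomputable def hatSub {W : Type*} [AddCommGroup W] [Module ℂ W]
    (𝒲 : ℤ → Submodule ℂ W) [Decomposition 𝒲] (M : Submodule ℂ W) : Submodule ℂ W :=
  Submodule.span ℂ {z | ∃ v ∈ M, v ≠ 0 ∧ ∃ d : ℤ, IsLead 𝒲 v d z}

/-- The Lie algebra stabilizer `{𝔤 ∈ L | 𝔤 ⬝ v = 0}` of `v`, as a subspace of `L`. -/
def lieStab (L : Type*) {V : Type*} [LieRing L] [LieAlgebra ℂ L]
    [AddCommGroup V] [Module ℂ V] [LieRingModule L V] [LieModule ℂ L V]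
    (v : V) : Submodule ℂ L where
  carrier := {g : L | ⁅g, v⁆ = 0}
  add_mem' := by
    intro a b ha hb
    simp only [Set.mem_setOf_eq] at *
    rw [add_lie, ha, hb, add_zero]
  zero_mem' := zero_lie v
  smul_mem' := by
    intro c g hg
    simp only [Set.mem_setOf_eq] at *
    rw [smul_lie, hg, smul_zero]

open scoped Classical

section MyLieSum

variable {L V : Type*} [LieRing L] [AddCommGroup V] [LieRingModule L V]

lemma mySumLie {ι : Type*} (s : Finset ι) (f : ι → L) (v : V) :
    ⁅∑ i ∈ s, f i, v⁆ = ∑ i ∈ s, ⁅f i, v⁆ := by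
  induction s using Finset.cons_induction with
  | empty => simp
  | cons a s ha ih => rw [Finset.sum_cons, Finset.sum_cons, add_lie, ih]

lemma myLieSum {ι : Type*} (s : Finset ι) (x : L) (f : ι → V) :
    ⁅x, ∑ i ∈ s, f i⁆ = ∑ i ∈ s, ⁅x, f i⁆ := by
  induction s using Finset.cons_induction with
  | empty => simp
  | cons a s ha ih => rw [Finset.sum_cons, Finset.sum_cons, lie_add, ih]

end MyLieSum

section Helpers

variable {W : Type*} [AddCommGroup W] [Module ℂ W]
  (𝒲 : ℤ → Submodule ℂ W) [Decomposition 𝒲]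

set_option synthInstance.maxHeartbeats 1000000 in
/-- `grComp` as a linear map. -/
noncomputable def grCompL (i : ℤ) : W →ₗ[ℂ] W where
  toFun v := grComp 𝒲 v i
  map_add' a b := by simp [grComp, decompose_add]
  map_smul' c a := by simp [grComp, decompose_smul, DirectSum.smul_apply]

lemma grCompL_apply (i : ℤ) (v : W) : grCompL 𝒲 i v = grComp 𝒲 v i := rfl

lemma grComp_mem (v : W) (i : ℤ) : grComp 𝒲 v i ∈ 𝒲 i := SetLike.coe_mem _

lemma grComp_of_mem_same {i : ℤ} {x : W} (hx : x ∈ 𝒲 i) : grComp 𝒲 x i = x := by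
  simp [grComp, DirectSum.decompose_of_mem_same 𝒲 hx]

lemma grComp_of_mem_ne {i j : ℤ} {x : W} (hx : x ∈ 𝒲 i) (h : i ≠ j) : grComp 𝒲 x j = 0 := by
  simp [grComp, DirectSum.decompose_of_mem_ne 𝒲 hx h]

lemma sum_grComp (v : W) : ∑ i ∈ (decompose 𝒲 v).support, grComp 𝒲 v i = v :=
  DirectSum.sum_support_decompose 𝒲 v

lemma grComp_zero_of_notMem_support (v : W) {i : ℤ}
    (h : i ∉ (decompose 𝒲 v).support) : grComp 𝒲 v i = 0 := by
  rw [DFinsupp.notMem_support_iff] at h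
  simp [grComp, h]

lemma grComp_zero (i : ℤ) : grComp 𝒲 (0 : W) i = 0 := by
  simp [grComp]

end Helpers

theorem statement6 {L V : Type*} [LieRing L] [LieAlgebra ℂ L] [FiniteDimensional ℂ L]
    [AddCommGroup V] [Module ℂ V] [FiniteDimensional ℂ V]
    [LieRingModule L V] [LieModule ℂ L V]
    (𝒢 : ℤ → Submodule ℂ L) [Decomposition 𝒢]
    (𝒱 : ℤ → Submodule ℂ V) [Decomposition 𝒱]
    (hbr : ∀ (i j : ℤ), ∀ x ∈ 𝒢 i, ∀ y ∈ 𝒢 j, ⁅x, y⁆ ∈ 𝒢 (i + j))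
    (hact : ∀ (j i : ℤ), ∀ x ∈ 𝒢 j, ∀ v ∈ 𝒱 i, ⁅x, v⁆ ∈ 𝒱 (i + j))
    (d e : ℤ) (hde : d < e) (y : V) (hy : y ≠ 0)
    (hlow : ∀ i < d, grComp 𝒱 y i = 0)
    (hz : grComp 𝒱 y d ≠ 0)
    (hmid : ∀ i : ℤ, d < i → i < e → grComp 𝒱 y i = 0)
    (hye : grComp 𝒱 y e ≠ 0) :
    ∀ h ∈ hatSub 𝒢 (lieStab L y),
      ⁅h, grComp 𝒱 y d⁆ = 0 ∧ ∃ g : L, ⁅g, grComp 𝒱 y d⁆ = ⁅h, grComp 𝒱 y e⁆ := by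
  classical
  set z := grComp 𝒱 y d with hzdef
  set w := grComp 𝒱 y e with hwdef
  let P : Submodule ℂ L :=
  { carrier := {h : L | ⁅h, z⁆ = 0 ∧ ∃ g : L, ⁅g, z⁆ = ⁅h, w⁆}
    add_mem' := by
      rintro a b ⟨ha1, ga, hga⟩ ⟨hb1, gb, hgb⟩
      exact ⟨by rw [add_lie, ha1, hb1, add_zero], ga + gb,
        by rw [add_lie, hga, hgb, add_lie]⟩
    zero_mem' := ⟨zero_lie z, 0, by rw [zero_lie, zero_lie]⟩
    smul_mem' := by
      rintro c a ⟨ha1, ga, hga⟩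
      exact ⟨by rw [smul_lie, ha1, smul_zero], c • ga,
        by rw [smul_lie, hga, smul_lie]⟩ }
  suffices hle : hatSub 𝒢 (lieStab L y) ≤ P by
    intro h hh
    exact hle hh
  rw [hatSub, Submodule.span_le]
  rintro h ⟨v, hv, hv0, m, hlead, hne, hlowv⟩
  have hvy : ⁅v, y⁆ = 0 := hv
  -- the key identity: the degree-`n` component of ⁅v, y⁆ vanishes
  have key : ∀ n : ℤ,
      ∑ j ∈ (decompose 𝒢 v).support, ⁅grComp 𝒢 v j, grComp 𝒱 y (n - j)⁆ = (0 : V) := by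
    intro n
    have h1 : ⁅v, y⁆ = ∑ j ∈ (decompose 𝒢 v).support,
        ∑ i ∈ (decompose 𝒱 y).support, ⁅grComp 𝒢 v j, grComp 𝒱 y i⁆ := by
      conv_lhs => rw [← sum_grComp 𝒢 v, ← sum_grComp 𝒱 y]
      rw [mySumLie]
      exact Finset.sum_congr rfl fun j _ => by rw [myLieSum]
    have h2 : grComp 𝒱 ⁅v, y⁆ n = 0 := by rw [hvy]; exact grComp_zero 𝒱 n
    rw [h1] at h2
    rw [show grComp 𝒱 (∑ j ∈ (decompose 𝒢 v).support,
        ∑ i ∈ (decompose 𝒱 y).support, ⁅grComp 𝒢 v j, grComp 𝒱 y i⁆) n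
      = ∑ j ∈ (decompose 𝒢 v).support, ∑ i ∈ (decompose 𝒱 y).support,
          grComp 𝒱 ⁅grComp 𝒢 v j, grComp 𝒱 y i⁆ n from by
        rw [← grCompL_apply, map_sum]
        exact Finset.sum_congr rfl fun j _ => by rw [map_sum]; rfl] at h2
    rw [← h2]
    refine Finset.sum_congr rfl fun j _ => ?_
    have inner : ∀ i ∈ (decompose 𝒱 y).support,
        grComp 𝒱 ⁅grComp 𝒢 v j, grComp 𝒱 y i⁆ n
          = if i = n - j then ⁅grComp 𝒢 v j, grComp 𝒱 y i⁆ else 0 := by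
      intro i _
      have hmem : ⁅grComp 𝒢 v j, grComp 𝒱 y i⁆ ∈ 𝒱 (i + j) :=
        hact j i _ (grComp_mem 𝒢 v j) _ (grComp_mem 𝒱 y i)
      rcases eq_or_ne i (n - j) with hi | hi
      · rw [if_pos hi]
        exact grComp_of_mem_same 𝒱 (by rwa [show i + j = n from by omega] at hmem)
      · rw [if_neg hi]
        exact grComp_of_mem_ne 𝒱 hmem (by omega)
    rw [Finset.sum_congr rfl inner, Finset.sum_ite_eq' (decompose 𝒱 y).support (n - j)]
    split
    · rfl
    · next hns =>
      rw [grComp_zero_of_notMem_support 𝒱 y hns, lie_zero]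
  have hm_mem : m ∈ (decompose 𝒢 v).support := by
    rw [DFinsupp.mem_support_iff]
    intro h0
    apply hne
    rw [← hlead]
    simp [grComp, h0]
  constructor
  · -- ⁅h, z⁆ = 0
    have hk := key (d + m)
    rw [Finset.sum_eq_single_of_mem m hm_mem ?side] at hk
    · rwa [show d + m - m = d from by ring, hlead] at hk
    case side =>
      intro j _ hjm
      rcases lt_or_gt_of_ne hjm with hlt | hgt
      · rw [hlowv j hlt, zero_lie]
      · rw [hlow (d + m - j) (by omega), lie_zero]
  · -- ∃ g, ⁅g, z⁆ = ⁅h, w⁆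
    set j' := e + m - d with hj'def
    refine ⟨-(grComp 𝒢 v j'), ?_⟩
    have hk := key (e + m)
    set S := (decompose 𝒢 v).support
    set f : ℤ → V := fun j => ⁅grComp 𝒢 v j, grComp 𝒱 y (e + m - j)⁆ with hfdef
    have h3 : ∑ j ∈ S, f j = ∑ j ∈ S ∪ {m, j'}, f j := by
      refine Finset.sum_subset Finset.subset_union_left fun j _ hjS => ?_
      rw [hfdef]
      simp only
      rw [grComp_zero_of_notMem_support 𝒢 v hjS, zero_lie]
    have h4 : ∑ j ∈ S ∪ {m, j'}, f j = ∑ j ∈ ({m, j'} : Finset ℤ), f j := by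
      refine (Finset.sum_subset Finset.subset_union_right fun j _ hjT => ?_).symm
      simp only [Finset.mem_insert, Finset.mem_singleton, not_or] at hjT
      obtain ⟨hjm, hjj'⟩ := hjT
      rw [hfdef]
      simp only
      rcases lt_or_gt_of_ne hjm with hlt | hgt
      · rw [hlowv j hlt, zero_lie]
      · rcases lt_or_gt_of_ne (show e + m - j ≠ d from by omega) with hi | hi
        · rw [hlow (e + m - j) hi, lie_zero]
        · rw [hmid (e + m - j) hi (by omega), lie_zero]
    have hmj' : m ≠ j' := by omega
    rw [h3, h4, Finset.sum_pair hmj'] at hk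
    have hfm : f m = ⁅h, w⁆ := by
      rw [hfdef]
      simp only
      rw [show e + m - m = e from by ring, hlead, hwdef]
    have hfj' : f j' = ⁅grComp 𝒢 v j', z⁆ := by
      rw [hfdef]
      simp only
      rw [show e + m - j' = d from by omega, hzdef]
    rw [hfm, hfj'] at hk
    rw [neg_lie]
    exact neg_eq_of_add_eq_zero_left hk
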